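/- If either (R0 ≤ 1 and A1 ≥ 0) or (R0 < 1 and Δ < 0), then the quadratic f has no positive real root, i.e., f(I) ≠ 0 for every I > 0. -/
import Mathlib


/-- If either (`R₀ ≤ 1` and `A₁ ≥ 0`) or (`R₀ < 1` and `Δ < 0`),
then the quadratic `f` has no positive real root. -/
theorem stmt4 (A d β b μ0 μ1 : ℝ)
    (hA : 0 < A) (hd : 0 < d) (hβ : 0 < β) (hb : 0 < b)
    (hμ0 : 0 < μ0) (hμ1 : 0 < μ1) (hμ : μ0 < μ1)
    (R0 : ℝ) (hR0 : R0 = β * A / (d * (d + μ1)))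
    (A2 A1 A0 Δ : ℝ)
    (hA2 : A2 = (d + μ0) * β)
    (hA1 : A1 = d ^ 2 + (b * β + μ0) * d + (b * μ1 - A) * β)
    (hA0 : A0 = b * d * (d + μ1) * (1 - R0))
    (hΔ : Δ = A1 ^ 2 - 4 * A2 * A0)
    (f : ℝ → ℝ) (hf : ∀ I, f I = A2 * I ^ 2 + A1 * I + A0)
    (hcase : (R0 ≤ 1 ∧ 0 ≤ A1) ∨ (R0 < 1 ∧ Δ < 0)) :
    ∀ I : ℝ, 0 < I → f I ≠ 0 := by
  intro I hI
  have hA2pos : 0 < A2 := by rw [hA2]; positivity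
  rw [hf]
  rcases hcase with ⟨h1, h2⟩ | ⟨h1, h2⟩
  · have hA0nn : 0 ≤ A0 := by
      rw [hA0]; have : 0 ≤ 1 - R0 := by linarith
      positivity
    nlinarith [mul_pos hA2pos (mul_pos hI hI), mul_nonneg h2 hI.le]
  · rw [hΔ] at h2
    nlinarith [sq_nonneg (2 * A2 * I + A1)]
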